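/- (Clebsch-constrained variational principle for the affine Euler–Poincaré equations.) Let l : 𝔤 × V* → ℝ be C¹ and dc : 𝔤 → V* a linear map satisfying dc([ξ,η]) = ξ·dc(η) − η·dc(ξ). Let ξ : [t₀,t₁] → 𝔤 be continuous and a : [t₀,t₁] → V*, v : [t₀,t₁] → V be C¹ curves such that t ↦ D₁l(ξ(t),a(t)) is C¹. Then the following are equivalent: (i) for all C¹ curves η : [t₀,t₁] → 𝔤, δa : [t₀,t₁] → V*, δv : [t₀,t₁] → V vanishing at both endpoints, setting δξ := η′ + [ξ,η], one has ∫_{t₀}^{t₁} [ ⟨D₁l(ξ,a), δξ⟩ + ⟨δa, D₂l(ξ,a)⟩ + ⟨(δa)′ + (δξ)·a + ξ·(δa) + dc(δξ), v⟩ + ⟨a′ + ξ·a + dc(ξ), δv⟩ ] dt = 0; (ii) on [t₀,t₁] the three equations hold: a′ + ξa + dc(ξ) = 0; v′ + ξv = D₂l(ξ,a); and (d/dt) D₁l(ξ,a) = ad*_ξ D₁l(ξ,a) + D₂l(ξ,a) ⋄ a − dc^T( D₂l(ξ,a) ). -/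

import Mathlib

set_option maxHeartbeats 1600000


/- Setup: 𝔤 and V are finite-dimensional real (normed) vector spaces; the Lie
bracket of 𝔤 is the bilinear map `br` (antisymmetric, Jacobi) and the
representation of 𝔤 on V is `ρ`. Duals are the continuous duals `g →L[ℝ] ℝ`
and `V →L[ℝ] ℝ`. The dual action is `⟨ξa, v⟩ = −⟨a, ξv⟩`, the diamond
operation `⟨v⋄a, ξ⟩ = −⟨ξa, v⟩`, the coadjoint operator
`⟨ad*_ξ μ, η⟩ = ⟨μ, [ξ,η]⟩`, and `⟨dc^T(v), ξ⟩ = ⟨dc(ξ), v⟩`. The partial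
derivatives `D₁l(ξ,a) ∈ 𝔤*` and `D₂l(ξ,a) ∈ V` (identifying V** ≅ V) of the
C¹ Lagrangian `l` are encoded by the hypothesis `hD`. The integrand in (i) is
the first variation of the Clebsch action `∫ [l(ξ,a) + ⟨a′ + ξa + dc(ξ), v⟩]`
under `δξ = η′ + [ξ,η]` and free variations `δa`, `δv`. -/

variable {g V : Type*}
  [NormedAddCommGroup g] [NormedSpace ℝ g] [FiniteDimensional ℝ g]
  [NormedAddCommGroup V] [NormedSpace ℝ V] [FiniteDimensional ℝ V]

/-- The induced action of `𝔤` on the dual `V*`: `⟨ξa, v⟩ = −⟨a, ξv⟩`. -/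
def dAct (ρ : g →ₗ[ℝ] V →L[ℝ] V) (ξ : g) (a : V →L[ℝ] ℝ) : V →L[ℝ] ℝ :=
  -(a.comp (ρ ξ))

/-- The diamond operation `⟨v⋄a, ξ⟩ = −⟨ξa, v⟩ = ⟨a, ξv⟩`. -/
noncomputable def diamond (ρ : g →ₗ[ℝ] V →L[ℝ] V) (v : V) (a : V →L[ℝ] ℝ) :
    g →L[ℝ] ℝ :=
  LinearMap.toContinuousLinearMap
    { toFun := fun ξ => a (ρ ξ v)
      map_add' := by intro x y; simp
      map_smul' := by intro c x; simp }

/-- The coadjoint operator `⟨ad*_ξ μ, η⟩ = ⟨μ, [ξ,η]⟩`. -/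
noncomputable def coad (br : g →ₗ[ℝ] g →ₗ[ℝ] g) (ξ : g) (μ : g →L[ℝ] ℝ) :
    g →L[ℝ] ℝ :=
  μ.comp (LinearMap.toContinuousLinearMap (br ξ))

/-- The transpose `⟨dc^T(v), ξ⟩ = ⟨dc(ξ), v⟩`. -/
noncomputable def dcT (dc : g →ₗ[ℝ] (V →L[ℝ] ℝ)) (v : V) : g →L[ℝ] ℝ :=
  LinearMap.toContinuousLinearMap
    { toFun := fun ξ => dc ξ v
      map_add' := by intro x y; simp
      map_smul' := by intro c x; simp }


section Helpers

open Set MeasureTheory intervalIntegral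

@[simp] lemma diamond_apply (ρ : g →ₗ[ℝ] V →L[ℝ] V) (v : V) (a : V →L[ℝ] ℝ) (x : g) :
    diamond ρ v a x = a (ρ x v) := rfl

@[simp] lemma coad_apply (br : g →ₗ[ℝ] g →ₗ[ℝ] g) (ξ : g) (μ : g →L[ℝ] ℝ) (x : g) :
    coad br ξ μ x = μ (br ξ x) := rfl

@[simp] lemma dcT_apply (dc : g →ₗ[ℝ] (V →L[ℝ] ℝ)) (v : V) (x : g) :
    dcT dc v x = dc x v := rfl

@[simp] lemma dAct_apply (ρ : g →ₗ[ℝ] V →L[ℝ] V) (ξ : g) (a : V →L[ℝ] ℝ) (w : V) :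
    dAct ρ ξ a w = -(a ((ρ ξ) w)) := rfl

@[simp] lemma dAct_zero_left (ρ : g →ₗ[ℝ] V →L[ℝ] V) (a : V →L[ℝ] ℝ) :
    dAct ρ (0 : g) a = 0 := by ext w; simp

@[simp] lemma dAct_zero_right (ρ : g →ₗ[ℝ] V →L[ℝ] V) (x : g) :
    dAct ρ x (0 : V →L[ℝ] ℝ) = 0 := by ext w; simp

@[simp] lemma dAct_smul_right (ρ : g →ₗ[ℝ] V →L[ℝ] V) (x : g) (c : ℝ) (a : V →L[ℝ] ℝ) :
    dAct ρ x (c • a) = c • dAct ρ x a := by ext w; simp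

/-- A bilinear map between finite-dimensional spaces, as a continuous bilinear map. -/
noncomputable def bilL {W₁ W₂ W₃ : Type*} [NormedAddCommGroup W₁] [NormedSpace ℝ W₁]
    [FiniteDimensional ℝ W₁] [NormedAddCommGroup W₂] [NormedSpace ℝ W₂]
    [FiniteDimensional ℝ W₂] [NormedAddCommGroup W₃] [NormedSpace ℝ W₃]
    (B : W₁ →ₗ[ℝ] W₂ →ₗ[ℝ] W₃) : W₁ →L[ℝ] W₂ →L[ℝ] W₃ :=
  LinearMap.toContinuousLinearMap
    ((LinearMap.toContinuousLinearMap :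
        (W₂ →ₗ[ℝ] W₃) ≃ₗ[ℝ] (W₂ →L[ℝ] W₃)).toLinearMap.comp B)

@[simp] lemma bilL_apply {W₁ W₂ W₃ : Type*} [NormedAddCommGroup W₁] [NormedSpace ℝ W₁]
    [FiniteDimensional ℝ W₁] [NormedAddCommGroup W₂] [NormedSpace ℝ W₂]
    [FiniteDimensional ℝ W₂] [NormedAddCommGroup W₃] [NormedSpace ℝ W₃]
    (B : W₁ →ₗ[ℝ] W₂ →ₗ[ℝ] W₃) (x : W₁) (y : W₂) : bilL B x y = B x y := rfl

section bil
variable {W₁ W₂ W₃ : Type*} [NormedAddCommGroup W₁] [NormedSpace ℝ W₁]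
    [FiniteDimensional ℝ W₁] [NormedAddCommGroup W₂] [NormedSpace ℝ W₂]
    [FiniteDimensional ℝ W₂] [NormedAddCommGroup W₃] [NormedSpace ℝ W₃]

omit [FiniteDimensional ℝ W₂] in
lemma contOn_lin (L : W₁ →ₗ[ℝ] W₂) {f : ℝ → W₁} {s : Set ℝ}
    (hf : ContinuousOn f s) : ContinuousOn (fun x => L (f x)) s :=
  (LinearMap.toContinuousLinearMap L).continuous.comp_continuousOn hf

omit [FiniteDimensional ℝ W₂] in
lemma hasDerivWithinAt_lin (L : W₁ →ₗ[ℝ] W₂) {f : ℝ → W₁} {f' : W₁} {s : Set ℝ} {t : ℝ}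
    (hf : HasDerivWithinAt f f' s t) :
    HasDerivWithinAt (fun x => L (f x)) (L f') s t :=
  (LinearMap.toContinuousLinearMap L).hasFDerivAt.comp_hasDerivWithinAt t hf

omit [FiniteDimensional ℝ W₂] in
lemma contDiffOn_lin (L : W₁ →ₗ[ℝ] W₂) {f : ℝ → W₁} {s : Set ℝ}
    (hf : ContDiffOn ℝ 1 f s) : ContDiffOn ℝ 1 (fun x => L (f x)) s :=
  (LinearMap.toContinuousLinearMap L).contDiff.comp_contDiffOn hf

lemma contOn_bil (B : W₁ →ₗ[ℝ] W₂ →ₗ[ℝ] W₃) {f : ℝ → W₁} {h : ℝ → W₂} {s : Set ℝ}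
    (hf : ContinuousOn f s) (hh : ContinuousOn h s) :
    ContinuousOn (fun x => B (f x) (h x)) s :=
  ((bilL B).continuous.comp_continuousOn hf).clm_apply hh

lemma hasDerivWithinAt_bil (B : W₁ →ₗ[ℝ] W₂ →ₗ[ℝ] W₃) {f : ℝ → W₁} {h : ℝ → W₂}
    {f' : W₁} {h' : W₂} {s : Set ℝ} {t : ℝ}
    (hf : HasDerivWithinAt f f' s t) (hh : HasDerivWithinAt h h' s t) :
    HasDerivWithinAt (fun x => B (f x) (h x)) (B f' (h t) + B (f t) h') s t :=
  ((bilL B).hasFDerivAt.comp_hasDerivWithinAt t hf).clm_apply hh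

lemma contDiffOn_bil (B : W₁ →ₗ[ℝ] W₂ →ₗ[ℝ] W₃) {f : ℝ → W₁} {h : ℝ → W₂} {s : Set ℝ}
    (hf : ContDiffOn ℝ 1 f s) (hh : ContDiffOn ℝ 1 h s) :
    ContDiffOn ℝ 1 (fun x => B (f x) (h x)) s :=
  ((bilL B).contDiff.comp_contDiffOn hf).clm_apply hh

end bil

/-- diamond as a bilinear (linear-map-valued) map. -/
noncomputable def diaLM (ρ : g →ₗ[ℝ] V →L[ℝ] V) :
    V →ₗ[ℝ] (V →L[ℝ] ℝ) →ₗ[ℝ] (g →L[ℝ] ℝ) where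
  toFun v := { toFun := fun a => diamond ρ v a
               map_add' := by intro x y; ext z; simp
               map_smul' := by intro c x; ext z; simp }
  map_add' := by intro x y; ext a z; simp
  map_smul' := by intro c x; ext a z; simp

@[simp] lemma diaLM_apply (ρ : g →ₗ[ℝ] V →L[ℝ] V) (v : V) (a : V →L[ℝ] ℝ) :
    diaLM ρ v a = diamond ρ v a := rfl

/-- dcT as a linear map. -/
noncomputable def dcTLM (dc : g →ₗ[ℝ] (V →L[ℝ] ℝ)) : V →ₗ[ℝ] (g →L[ℝ] ℝ) where
  toFun v := dcT dc v
  map_add' := by intro x y; ext z; simp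
  map_smul' := by intro c x; ext z; simp

@[simp] lemma dcTLM_apply (dc : g →ₗ[ℝ] (V →L[ℝ] ℝ)) (v : V) : dcTLM dc v = dcT dc v := rfl

/-- dAct as a bilinear (linear-map-valued) map. -/
noncomputable def dActLM (ρ : g →ₗ[ℝ] V →L[ℝ] V) :
    g →ₗ[ℝ] (V →L[ℝ] ℝ) →ₗ[ℝ] (V →L[ℝ] ℝ) where
  toFun x := { toFun := fun a => dAct ρ x a
               map_add' := by intro a b; ext z; simp; ring
               map_smul' := by intro c a; ext z; simp }
  map_add' := by intro x y; ext a z; simp; ring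
  map_smul' := by intro c x; ext a z; simp [mul_comm]

@[simp] lemma dActLM_apply (ρ : g →ₗ[ℝ] V →L[ℝ] V) (x : g) (a : V →L[ℝ] ℝ) :
    dActLM ρ x a = dAct ρ x a := rfl

lemma eq_zero_of_forall_clm {x : V} (h : ∀ a₀ : V →L[ℝ] ℝ, a₀ x = 0) : x = 0 := by
  rw [← Module.forall_dual_apply_eq_zero_iff ℝ x]
  intro φ
  exact h (LinearMap.toContinuousLinearMap φ)

/-- The key algebraic identity relating the derivative of
`ν = μ - v ⋄ a + dc^T v` to the affine Euler–Poincaré equation. -/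
lemma alg_key (br : g →ₗ[ℝ] g →ₗ[ℝ] g) (ρ : g →ₗ[ℝ] V →L[ℝ] V)
    (hρ : ∀ x y : g, ρ (br x y) = (ρ x).comp (ρ y) - (ρ y).comp (ρ x))
    (dc : g →ₗ[ℝ] (V →L[ℝ] ℝ))
    (hdc : ∀ x y : g, dc (br x y) = dAct ρ x (dc y) - dAct ρ y (dc x))
    (ξ0 : g) (m : g →L[ℝ] ℝ) (α α' : V →L[ℝ] ℝ) (w w' D2v : V)
    (hα : α' = -(dc ξ0) - dAct ρ ξ0 α) (hw : w' = D2v - ρ ξ0 w) :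
    (coad br ξ0 m + diamond ρ D2v α - dcT dc D2v)
      - (diamond ρ w' α + diamond ρ w α') + dcT dc w'
    = coad br ξ0 (m - diamond ρ w α + dcT dc w) := by
  subst hα hw
  ext e
  simp [hρ, hdc]
  ring

/-- Fundamental theorem of calculus on a closed interval, specialized. -/
lemma ftc_sub {t₀ t₁ : ℝ} (ht : t₀ ≤ t₁) {F F' : ℝ → ℝ}
    (hF : ContinuousOn F (Set.Icc t₀ t₁))
    (hd : ∀ t ∈ Set.Icc t₀ t₁, HasDerivWithinAt F (F' t) (Set.Icc t₀ t₁) t)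
    (hint : IntervalIntegrable F' MeasureTheory.volume t₀ t₁) :
    ∫ t in t₀..t₁, F' t = F t₁ - F t₀ := by
  apply intervalIntegral.integral_eq_sub_of_hasDeriv_right_of_le ht hF _ hint
  intro x hx
  exact ((hd x (Set.Ioo_subset_Icc_self hx)).hasDerivAt
    (Icc_mem_nhds hx.1 hx.2)).hasDerivWithinAt

/-- Integration by parts with vanishing boundary terms. -/
lemma ibp_zero {t₀ t₁ : ℝ} (ht : t₀ < t₁) {φ u u' : ℝ → ℝ}
    (hφ : ContDiff ℝ 1 φ) (h0 : φ t₀ = 0) (h1 : φ t₁ = 0)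
    (hu : ContinuousOn u (Set.Icc t₀ t₁)) (hu'c : ContinuousOn u' (Set.Icc t₀ t₁))
    (hud : ∀ t ∈ Set.Icc t₀ t₁, HasDerivWithinAt u (u' t) (Set.Icc t₀ t₁) t) :
    ∫ t in t₀..t₁, (deriv φ t * u t + φ t * u' t) = 0 := by
  have key : ∀ t ∈ Set.Icc t₀ t₁, HasDerivWithinAt (fun s => φ s * u s)
      (deriv φ t * u t + φ t * u' t) (Set.Icc t₀ t₁) t := fun t htm =>
    (((hφ.differentiable one_ne_zero) t).hasDerivAt.hasDerivWithinAt).mul (hud t htm)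
  have hint : IntervalIntegrable (fun t => deriv φ t * u t + φ t * u' t)
      MeasureTheory.volume t₀ t₁ := by
    apply ContinuousOn.intervalIntegrable
    rw [Set.uIcc_of_le ht.le]
    exact ((hφ.continuous_deriv le_rfl).continuousOn.mul hu).add
      (hφ.continuous.continuousOn.mul hu'c)
  rw [ftc_sub ht.le (hφ.continuous.continuousOn.mul hu) key hint, Pi.mul_apply, Pi.mul_apply, h0, h1]
  ring

lemma split_int {t₀ t₁ : ℝ} (hle : t₀ ≤ t₁) {F A B : ℝ → ℝ}
    (hFA : ∀ t ∈ Set.Icc t₀ t₁, F t = A t + B t)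
    (hA : ContinuousOn A (Set.Icc t₀ t₁)) (hB : ContinuousOn B (Set.Icc t₀ t₁))
    (hF : ∫ t in t₀..t₁, F t = 0) (hBz : ∫ t in t₀..t₁, B t = 0) :
    ∫ t in t₀..t₁, A t = 0 := by
  have hAi : IntervalIntegrable A MeasureTheory.volume t₀ t₁ := by
    apply ContinuousOn.intervalIntegrable; rwa [Set.uIcc_of_le hle]
  have hBi : IntervalIntegrable B MeasureTheory.volume t₀ t₁ := by
    apply ContinuousOn.intervalIntegrable; rwa [Set.uIcc_of_le hle]
  have h1 : ∫ t in t₀..t₁, F t = (∫ t in t₀..t₁, A t) + ∫ t in t₀..t₁, B t := by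
    rw [← intervalIntegral.integral_add hAi hBi]
    exact intervalIntegral.integral_congr
      (fun s hs => hFA s (by rwa [Set.uIcc_of_le hle] at hs))
  rw [hF, hBz, add_zero] at h1
  linarith

lemma fund_aux {t₀ t₁ : ℝ} (ht : t₀ < t₁) {f : ℝ → ℝ}
    (hf : ContinuousOn f (Set.Icc t₀ t₁))
    (h : ∀ φ : ℝ → ℝ, ContDiff ℝ 1 φ → φ t₀ = 0 → φ t₁ = 0 →
      ∫ t in t₀..t₁, φ t * f t = 0) :
    ∀ t ∈ Set.Ioo t₀ t₁, ¬ (0 < f t) := by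
  rintro s hs hpos
  have hcA : ContinuousAt f s := hf.continuousAt (Icc_mem_nhds hs.1 hs.2)
  have hev : ∀ᶠ x in nhds s, f s / 2 < f x ∧ x ∈ Set.Ioo t₀ t₁ :=
    (hcA.eventually (eventually_gt_nhds (by linarith))).and
      (Ioo_mem_nhds hs.1 hs.2)
  obtain ⟨ε, hε, hball⟩ := Metric.eventually_nhds_iff.mp hev
  set δ := ε / 2 with hδdef
  have hδ : 0 < δ := by positivity
  have hIcc : ∀ x ∈ Set.Icc (s - δ) (s + δ), f s / 2 < f x ∧ x ∈ Set.Ioo t₀ t₁ := by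
    intro x hx
    apply hball
    rw [Real.dist_eq, abs_sub_lt_iff]
    constructor <;> [linarith [hx.2]; linarith [hx.1]]
  have h1 : t₀ < s - δ := (hIcc (s - δ) ⟨le_refl _, by linarith⟩).2.1
  have h2 : s + δ < t₁ := (hIcc (s + δ) ⟨by linarith, le_refl _⟩).2.2
  set B : ContDiffBump s := ⟨δ/2, δ, by positivity, by linarith⟩ with hB
  have hBsupp : ∀ x : ℝ, δ ≤ |x - s| → B x = 0 := by
    intro x hx
    exact B.zero_of_le_dist (by rwa [Real.dist_eq])
  have hφ0 : (B : ℝ → ℝ) t₀ = 0 :=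
    hBsupp _ (by rw [abs_sub_comm, abs_of_nonneg (by linarith)]; linarith)
  have hφ1 : (B : ℝ → ℝ) t₁ = 0 :=
    hBsupp _ (by rw [abs_of_nonneg (by linarith)]; linarith)
  have hzero := h B B.contDiff hφ0 hφ1
  have hint : ∀ u v : ℝ, u ∈ Set.Icc t₀ t₁ → v ∈ Set.Icc t₀ t₁ →
      IntervalIntegrable (fun t => B t * f t) MeasureTheory.volume u v := by
    intro u v hu hv
    apply ContinuousOn.intervalIntegrable
    apply B.continuous.continuousOn.mul (hf.mono _)
    exact Set.uIcc_subset_Icc hu hv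
  have m0 : (t₀:ℝ) ∈ Set.Icc t₀ t₁ := ⟨le_refl _, le_of_lt ht⟩
  have m1 : (t₁:ℝ) ∈ Set.Icc t₀ t₁ := ⟨le_of_lt ht, le_refl _⟩
  have ma : s - δ ∈ Set.Icc t₀ t₁ := ⟨by linarith, by linarith⟩
  have mb : s - δ/2 ∈ Set.Icc t₀ t₁ := ⟨by linarith, by linarith⟩
  have mc : s + δ/2 ∈ Set.Icc t₀ t₁ := ⟨by linarith, by linarith⟩
  have md : s + δ ∈ Set.Icc t₀ t₁ := ⟨by linarith, by linarith⟩
  have I1 : ∫ t in t₀..(s-δ), B t * f t = 0 := by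
    rw [intervalIntegral.integral_congr (g := fun _ => (0:ℝ))]
    · simp
    · intro x hx
      rw [Set.uIcc_of_le (by linarith)] at hx
      have : B x = 0 := hBsupp x
        (by rw [abs_sub_comm, abs_of_nonneg (by linarith [hx.2])]; linarith [hx.2])
      simp [this]
  have I5 : ∫ t in (s+δ)..t₁, B t * f t = 0 := by
    rw [intervalIntegral.integral_congr (g := fun _ => (0:ℝ))]
    · simp
    · intro x hx
      rw [Set.uIcc_of_le (by linarith)] at hx
      have : B x = 0 := hBsupp x
        (by rw [abs_of_nonneg (by linarith [hx.1])]; linarith [hx.1])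
      simp [this]
  have I2 : 0 ≤ ∫ t in (s-δ)..(s-δ/2), B t * f t := by
    apply intervalIntegral.integral_nonneg (by linarith)
    intro u hu
    exact mul_nonneg B.nonneg (le_of_lt (by linarith [(hIcc u ⟨hu.1, by linarith [hu.2]⟩).1]))
  have I4 : 0 ≤ ∫ t in (s+δ/2)..(s+δ), B t * f t := by
    apply intervalIntegral.integral_nonneg (by linarith)
    intro u hu
    exact mul_nonneg B.nonneg (le_of_lt (by linarith [(hIcc u ⟨by linarith [hu.1], hu.2⟩).1]))
  have I3 : 0 < ∫ t in (s-δ/2)..(s+δ/2), B t * f t := by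
    apply intervalIntegral.intervalIntegral_pos_of_pos_on (hint _ _ mb mc)
    · intro x hx
      have hx' : x ∈ Metric.closedBall s (δ/2) := by
        rw [Metric.mem_closedBall, Real.dist_eq, abs_sub_le_iff]
        constructor <;> [linarith [hx.2]; linarith [hx.1]]
      rw [B.one_of_mem_closedBall hx', one_mul]
      linarith [(hIcc x ⟨by linarith [hx.1], by linarith [hx.2]⟩).1]
    · linarith
  have hsplit : ∫ t in t₀..t₁, B t * f t
      = (∫ t in t₀..(s-δ), B t * f t) + (∫ t in (s-δ)..(s-δ/2), B t * f t)
        + (∫ t in (s-δ/2)..(s+δ/2), B t * f t) + (∫ t in (s+δ/2)..(s+δ), B t * f t)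
        + (∫ t in (s+δ)..t₁, B t * f t) := by
    rw [intervalIntegral.integral_add_adjacent_intervals (hint _ _ m0 ma) (hint _ _ ma mb),
      intervalIntegral.integral_add_adjacent_intervals
        ((hint _ _ m0 ma).trans (hint _ _ ma mb)) (hint _ _ mb mc),
      intervalIntegral.integral_add_adjacent_intervals
        (((hint _ _ m0 ma).trans (hint _ _ ma mb)).trans (hint _ _ mb mc)) (hint _ _ mc md),
      intervalIntegral.integral_add_adjacent_intervals
        ((((hint _ _ m0 ma).trans (hint _ _ ma mb)).trans (hint _ _ mb mc)).trans
          (hint _ _ mc md)) (hint _ _ md m1)]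
  rw [hzero] at hsplit
  linarith

/-- Fundamental lemma of the calculus of variations on `[t₀, t₁]`. -/
lemma fund_lemma {t₀ t₁ : ℝ} (ht : t₀ < t₁) {f : ℝ → ℝ}
    (hf : ContinuousOn f (Set.Icc t₀ t₁))
    (h : ∀ φ : ℝ → ℝ, ContDiff ℝ 1 φ → φ t₀ = 0 → φ t₁ = 0 →
      ∫ t in t₀..t₁, φ t * f t = 0) :
    ∀ t ∈ Set.Icc t₀ t₁, f t = 0 := by
  have hIoo : ∀ t ∈ Set.Ioo t₀ t₁, f t = 0 := by
    intro t htm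
    rcases lt_trichotomy (f t) 0 with hlt | he | hgt
    · exfalso
      refine fund_aux ht hf.neg (fun φ hφ h0 h1 => ?_) t htm (by simpa using hlt)
      simp only [Pi.neg_apply, mul_neg, intervalIntegral.integral_neg, h φ hφ h0 h1, neg_zero]
    · exact he
    · exact absurd hgt (fund_aux ht hf h t htm)
  intro t htm
  rcases eq_or_lt_of_le htm.1 with h0 | h0
  · have hne : (nhdsWithin t₀ (Set.Ioo t₀ t₁)).NeBot := by
      apply mem_closure_iff_nhdsWithin_neBot.mp
      rw [closure_Ioo ht.ne]
      exact ⟨le_refl _, le_of_lt ht⟩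
    have htend : Filter.Tendsto f (nhdsWithin t₀ (Set.Ioo t₀ t₁)) (nhds (f t₀)) :=
      ((hf t₀ ⟨le_refl _, le_of_lt ht⟩).mono_left (nhdsWithin_mono _ Set.Ioo_subset_Icc_self))
    have htend0 : Filter.Tendsto f (nhdsWithin t₀ (Set.Ioo t₀ t₁)) (nhds 0) := by
      rw [Filter.tendsto_congr' (Filter.eventually_iff_exists_mem.mpr
        ⟨Set.Ioo t₀ t₁, self_mem_nhdsWithin, fun x hx => hIoo x hx⟩)]
      exact tendsto_const_nhds
    rw [← h0]
    exact tendsto_nhds_unique htend htend0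
  rcases eq_or_lt_of_le htm.2 with h1 | h1
  · have hne : (nhdsWithin t₁ (Set.Ioo t₀ t₁)).NeBot := by
      apply mem_closure_iff_nhdsWithin_neBot.mp
      rw [closure_Ioo ht.ne]
      exact ⟨le_of_lt ht, le_refl _⟩
    have htend : Filter.Tendsto f (nhdsWithin t₁ (Set.Ioo t₀ t₁)) (nhds (f t₁)) :=
      ((hf t₁ ⟨le_of_lt ht, le_refl _⟩).mono_left (nhdsWithin_mono _ Set.Ioo_subset_Icc_self))
    have htend0 : Filter.Tendsto f (nhdsWithin t₁ (Set.Ioo t₀ t₁)) (nhds 0) := by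
      rw [Filter.tendsto_congr' (Filter.eventually_iff_exists_mem.mpr
        ⟨Set.Ioo t₀ t₁, self_mem_nhdsWithin, fun x hx => hIoo x hx⟩)]
      exact tendsto_const_nhds
    rw [h1]
    exact tendsto_nhds_unique htend htend0
  · exact hIoo t ⟨h0, h1⟩

lemma hasDerivWithinAt_clm_apply_const {W₁ W₂ : Type*} [NormedAddCommGroup W₁]
    [NormedSpace ℝ W₁] [NormedAddCommGroup W₂] [NormedSpace ℝ W₂]
    {c : ℝ → (W₁ →L[ℝ] W₂)} {c' : W₁ →L[ℝ] W₂} {x : W₁} {s : Set ℝ} {t : ℝ}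
    (h : HasDerivWithinAt c c' s t) :
    HasDerivWithinAt (fun r => c r x) (c' x) s t := by
  simpa using h.clm_apply (hasDerivWithinAt_const t s x)

end Helpers

/-- **Clebsch-constrained variational principle for the affine
Euler–Poincaré equations.** The first variation of the Clebsch action
vanishes for all variations `δξ = η′ + [ξ,η]` (with `η` vanishing at the
endpoints) and free variations `δa`, `δv` vanishing at the endpoints iff the
advection equation `a′ + ξa + dc(ξ) = 0`, the equation `v′ + ξv = D₂l(ξ,a)`,
and the affine Euler–Poincaré equation
`(d/dt) D₁l = ad*_ξ D₁l + D₂l ⋄ a − dc^T(D₂l)` hold on `[t₀,t₁]`. -/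
theorem clebsch_variational_principle
    (br : g →ₗ[ℝ] g →ₗ[ℝ] g)
    (hbr : ∀ x : g, br x x = 0)
    (hjac : ∀ x y z : g, br x (br y z) + br y (br z x) + br z (br x y) = 0)
    (ρ : g →ₗ[ℝ] V →L[ℝ] V)
    (hρ : ∀ x y : g, ρ (br x y) = (ρ x).comp (ρ y) - (ρ y).comp (ρ x))
    (dc : g →ₗ[ℝ] (V →L[ℝ] ℝ))
    (hdc : ∀ x y : g, dc (br x y) = dAct ρ x (dc y) - dAct ρ y (dc x))
    (l : g × (V →L[ℝ] ℝ) → ℝ) (hl : ContDiff ℝ 1 l)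
    (D1 : g × (V →L[ℝ] ℝ) → (g →L[ℝ] ℝ)) (D2 : g × (V →L[ℝ] ℝ) → V)
    (hD : ∀ p : g × (V →L[ℝ] ℝ),
      HasFDerivAt l
        ((D1 p).comp (ContinuousLinearMap.fst ℝ g (V →L[ℝ] ℝ)) +
          (ContinuousLinearMap.apply ℝ ℝ (D2 p)).comp
            (ContinuousLinearMap.snd ℝ g (V →L[ℝ] ℝ))) p)
    (t₀ t₁ : ℝ) (ht : t₀ < t₁)
    (ξ : ℝ → g) (a : ℝ → (V →L[ℝ] ℝ)) (v : ℝ → V)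
    (hξ : ContinuousOn ξ (Set.Icc t₀ t₁))
    (ha : ContDiffOn ℝ 1 a (Set.Icc t₀ t₁))
    (hv : ContDiffOn ℝ 1 v (Set.Icc t₀ t₁))
    (hD1 : ContDiffOn ℝ 1 (fun t => D1 (ξ t, a t)) (Set.Icc t₀ t₁)) :
    (∀ (η : ℝ → g) (da : ℝ → (V →L[ℝ] ℝ)) (dv : ℝ → V),
        ContDiffOn ℝ 1 η (Set.Icc t₀ t₁) →
        ContDiffOn ℝ 1 da (Set.Icc t₀ t₁) →
        ContDiffOn ℝ 1 dv (Set.Icc t₀ t₁) →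
        η t₀ = 0 → η t₁ = 0 → da t₀ = 0 → da t₁ = 0 → dv t₀ = 0 → dv t₁ = 0 →
        (∫ t in t₀..t₁,
          ((D1 (ξ t, a t)) (derivWithin η (Set.Icc t₀ t₁) t + br (ξ t) (η t))
            + (da t) (D2 (ξ t, a t))
            + (derivWithin da (Set.Icc t₀ t₁) t
                + dAct ρ (derivWithin η (Set.Icc t₀ t₁) t + br (ξ t) (η t)) (a t)
                + dAct ρ (ξ t) (da t)
                + dc (derivWithin η (Set.Icc t₀ t₁) t + br (ξ t) (η t))) (v t)
            + (derivWithin a (Set.Icc t₀ t₁) t + dAct ρ (ξ t) (a t) + dc (ξ t))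
                (dv t))) = 0) ↔
      (∀ t ∈ Set.Icc t₀ t₁,
        (derivWithin a (Set.Icc t₀ t₁) t + dAct ρ (ξ t) (a t) + dc (ξ t) = 0) ∧
        (derivWithin v (Set.Icc t₀ t₁) t + ρ (ξ t) (v t) = D2 (ξ t, a t)) ∧
        HasDerivWithinAt (fun s => D1 (ξ s, a s))
          (coad br (ξ t) (D1 (ξ t, a t)) + diamond ρ (D2 (ξ t, a t)) (a t)
            - dcT dc (D2 (ξ t, a t)))
          (Set.Icc t₀ t₁) t) := by
  classical
  have hle : t₀ ≤ t₁ := ht.le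
  have uD : UniqueDiffOn ℝ (Set.Icc t₀ t₁) := uniqueDiffOn_Icc ht
  have huI : Set.uIcc t₀ t₁ = Set.Icc t₀ t₁ := Set.uIcc_of_le hle
  have hD2b : ∀ (p : g × (V →L[ℝ] ℝ)) (b : V →L[ℝ] ℝ),
      b (D2 p) = (fderiv ℝ l p) ((0 : g), b) := by
    intro p b
    rw [(hD p).fderiv]
    simp
  have hfd : Continuous (fderiv ℝ l) := hl.continuous_fderiv one_ne_zero
  have hξa : ContinuousOn (fun t => (ξ t, a t)) (Set.Icc t₀ t₁) := hξ.prodMk ha.continuousOn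
  have hD2c : ∀ (b : ℝ → (V →L[ℝ] ℝ)), ContinuousOn b (Set.Icc t₀ t₁) →
      ContinuousOn (fun t => (b t) (D2 (ξ t, a t))) (Set.Icc t₀ t₁) := by
    intro b hb
    have he : ∀ t, (b t) (D2 (ξ t, a t)) = (fderiv ℝ l (ξ t, a t)) ((0:g), b t) :=
      fun t => hD2b _ _
    simp only [he]
    exact (hfd.comp_continuousOn hξa).clm_apply (continuousOn_const.prodMk hb)
  have hac := ha.continuousOn
  have hvc := hv.continuousOn
  have had : ∀ t ∈ Set.Icc t₀ t₁,
      HasDerivWithinAt a (derivWithin a (Set.Icc t₀ t₁) t) (Set.Icc t₀ t₁) t :=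
    fun t htm => ((ha.differentiableOn one_ne_zero) t htm).hasDerivWithinAt
  have hvd : ∀ t ∈ Set.Icc t₀ t₁,
      HasDerivWithinAt v (derivWithin v (Set.Icc t₀ t₁) t) (Set.Icc t₀ t₁) t :=
    fun t htm => ((hv.differentiableOn one_ne_zero) t htm).hasDerivWithinAt
  have ha'c : ContinuousOn (derivWithin a (Set.Icc t₀ t₁)) (Set.Icc t₀ t₁) :=
    ha.continuousOn_derivWithin uD le_rfl
  have hv'c : ContinuousOn (derivWithin v (Set.Icc t₀ t₁)) (Set.Icc t₀ t₁) :=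
    hv.continuousOn_derivWithin uD le_rfl
  have hμc : ContinuousOn (fun t => D1 (ξ t, a t)) (Set.Icc t₀ t₁) := hD1.continuousOn
  set ν : ℝ → (g →L[ℝ] ℝ) :=
    fun s => D1 (ξ s, a s) - diamond ρ (v s) (a s) + dcT dc (v s) with hνdef
  have hνcd : ContDiffOn ℝ 1 ν (Set.Icc t₀ t₁) := by
    rw [hνdef]
    exact (hD1.sub (contDiffOn_bil (diaLM ρ) hv ha)).add (contDiffOn_lin (dcTLM dc) hv)
  have hνc : ContinuousOn ν (Set.Icc t₀ t₁) := hνcd.continuousOn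
  have hν'c : ContinuousOn (derivWithin ν (Set.Icc t₀ t₁)) (Set.Icc t₀ t₁) :=
    hνcd.continuousOn_derivWithin uD le_rfl
  have hνdiff : ∀ t ∈ Set.Icc t₀ t₁,
      HasDerivWithinAt ν (derivWithin ν (Set.Icc t₀ t₁) t) (Set.Icc t₀ t₁) t :=
    fun t htm => ((hνcd.differentiableOn one_ne_zero) t htm).hasDerivWithinAt
  constructor
  · intro H
    -- the advection equation
    have heq1 : ∀ t ∈ Set.Icc t₀ t₁,
        derivWithin a (Set.Icc t₀ t₁) t + dAct ρ (ξ t) (a t) + dc (ξ t) = 0 := by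
      intro t htm
      ext w
      rw [ContinuousLinearMap.zero_apply]
      refine fund_lemma ht
        (f := fun s => (derivWithin a (Set.Icc t₀ t₁) s + dAct ρ (ξ s) (a s) + dc (ξ s)) w)
        (((ha'c.add (contOn_bil (dActLM ρ) hξ hac)).add (contOn_lin dc hξ)).clm_apply
          continuousOn_const) ?_ t htm
      intro φ hφ hφ0 hφ1
      have h0 := H (fun _ => 0) (fun _ => 0) (fun s => φ s • w)
        contDiffOn_const contDiffOn_const ((hφ.smul contDiff_const).contDiffOn)
        rfl rfl rfl rfl (by simp [hφ0]) (by simp [hφ1])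
      refine Eq.trans ?_ h0
      apply intervalIntegral.integral_congr
      intro s hs
      rw [huI] at hs
      have hz : derivWithin (fun _ => (0:g)) (Set.Icc t₀ t₁) s = 0 :=
        congrFun (derivWithin_const _ _) s
      have hz2 : derivWithin (fun _ => (0:V →L[ℝ] ℝ)) (Set.Icc t₀ t₁) s = 0 :=
        congrFun (derivWithin_const _ _) s
      simp [hz, hz2, mul_comm]
    -- the equation v' + ξ v = D₂l
    have heq2 : ∀ t ∈ Set.Icc t₀ t₁,
        derivWithin v (Set.Icc t₀ t₁) t + ρ (ξ t) (v t) = D2 (ξ t, a t) := by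
      intro t htm
      rw [← sub_eq_zero]
      apply eq_zero_of_forall_clm
      intro a₀
      have key := fund_lemma ht
        (f := fun s => a₀ (D2 (ξ s, a s)) - a₀ ((ρ (ξ s)) (v s))
          - a₀ (derivWithin v (Set.Icc t₀ t₁) s))
        (((hD2c (fun _ => a₀) continuousOn_const).sub
          (a₀.continuous.comp_continuousOn ((contOn_lin ρ hξ).clm_apply hvc))).sub
          (a₀.continuous.comp_continuousOn hv'c)) ?_ t htm
      · simp only [map_sub, map_add] at key ⊢
        linarith
      intro φ hφ hφ0 hφ1
      have hφd : ∀ s : ℝ, HasDerivAt φ (deriv φ s) s :=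
        fun s => ((hφ.differentiable one_ne_zero) s).hasDerivAt
      have hdaW : ∀ s ∈ Set.Icc t₀ t₁,
          derivWithin (fun r => φ r • a₀) (Set.Icc t₀ t₁) s = deriv φ s • a₀ :=
        fun s hsm => (((hφd s).smul_const a₀).hasDerivWithinAt).derivWithin (uD s hsm)
      have h0 := H (fun _ => 0) (fun s => φ s • a₀) (fun _ => 0)
        contDiffOn_const ((hφ.smul contDiff_const).contDiffOn) contDiffOn_const
        rfl rfl (by simp [hφ0]) (by simp [hφ1]) rfl rfl
      refine split_int hle ?_
        ((hφ.continuous.continuousOn.mul (((hD2c (fun _ => a₀) continuousOn_const).sub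
          (a₀.continuous.comp_continuousOn ((contOn_lin ρ hξ).clm_apply hvc))).sub
          (a₀.continuous.comp_continuousOn hv'c))))
        (((hφ.continuous_deriv le_rfl).continuousOn.mul
            (a₀.continuous.comp_continuousOn hvc)).add
          (hφ.continuous.continuousOn.mul (a₀.continuous.comp_continuousOn hv'c)))
        h0
        (ibp_zero ht (u := fun s => a₀ (v s))
          (u' := fun s => a₀ (derivWithin v (Set.Icc t₀ t₁) s)) hφ hφ0 hφ1
          (a₀.continuous.comp_continuousOn hvc)
          (a₀.continuous.comp_continuousOn hv'c)
          (fun s hsm => a₀.hasFDerivAt.comp_hasDerivWithinAt s (hvd s hsm)))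
      intro s hsm
      have hz : derivWithin (fun _ => (0:g)) (Set.Icc t₀ t₁) s = 0 :=
        congrFun (derivWithin_const _ _) s
      simp [hz, hdaW s hsm]
      ring
    -- the affine Euler–Poincaré equation, via ν
    have heq3 : ∀ t ∈ Set.Icc t₀ t₁,
        derivWithin ν (Set.Icc t₀ t₁) t = coad br (ξ t) (ν t) := by
      intro t htm
      ext x
      rw [coad_apply]
      have key := fund_lemma ht
        (f := fun s => ν s (br (ξ s) x) - derivWithin ν (Set.Icc t₀ t₁) s x)
        ((hνc.clm_apply (contOn_bil br hξ continuousOn_const)).sub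
          (hν'c.clm_apply continuousOn_const)) ?_ t htm
      · have key' : ν t ((br (ξ t)) x) - (derivWithin ν (Set.Icc t₀ t₁) t) x = 0 := key
        linarith
      intro φ hφ hφ0 hφ1
      have hφd : ∀ s : ℝ, HasDerivAt φ (deriv φ s) s :=
        fun s => ((hφ.differentiable one_ne_zero) s).hasDerivAt
      have hηW : ∀ s ∈ Set.Icc t₀ t₁,
          derivWithin (fun r => φ r • x) (Set.Icc t₀ t₁) s = deriv φ s • x :=
        fun s hsm => (((hφd s).smul_const x).hasDerivWithinAt).derivWithin (uD s hsm)
      have h0 := H (fun s => φ s • x) (fun _ => 0) (fun _ => 0)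
        ((hφ.smul contDiff_const).contDiffOn) contDiffOn_const contDiffOn_const
        (by simp [hφ0]) (by simp [hφ1]) rfl rfl rfl rfl
      refine split_int hle ?_
        (hφ.continuous.continuousOn.mul
          ((hνc.clm_apply (contOn_bil br hξ continuousOn_const)).sub
            (hν'c.clm_apply continuousOn_const)))
        (((hφ.continuous_deriv le_rfl).continuousOn.mul
            (hνc.clm_apply continuousOn_const)).add
          (hφ.continuous.continuousOn.mul (hν'c.clm_apply continuousOn_const)))
        h0
        (ibp_zero ht (u := fun s => ν s x)
          (u' := fun s => derivWithin ν (Set.Icc t₀ t₁) s x) hφ hφ0 hφ1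
          (hνc.clm_apply continuousOn_const)
          (hν'c.clm_apply continuousOn_const)
          (fun s hsm => hasDerivWithinAt_clm_apply_const (hνdiff s hsm)))
      intro s hsm
      have hz2 : derivWithin (fun _ => (0:V →L[ℝ] ℝ)) (Set.Icc t₀ t₁) s = 0 :=
        congrFun (derivWithin_const _ _) s
      simp [hz2, hηW s hsm, hνdef]
      ring
    intro t htm
    refine ⟨heq1 t htm, heq2 t htm, ?_⟩
    have hνdW : HasDerivWithinAt ν (coad br (ξ t) (ν t)) (Set.Icc t₀ t₁) t := by
      rw [← heq3 t htm]
      exact hνdiff t htm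
    have hα : derivWithin a (Set.Icc t₀ t₁) t = -(dc (ξ t)) - dAct ρ (ξ t) (a t) :=
      eq_sub_of_add_eq (eq_neg_of_add_eq_zero_left (heq1 t htm))
    have hw : derivWithin v (Set.Icc t₀ t₁) t = D2 (ξ t, a t) - ρ (ξ t) (v t) :=
      eq_sub_of_add_eq (heq2 t htm)
    have hcomb : HasDerivWithinAt (fun s => ν s + diaLM ρ (v s) (a s) - dcTLM dc (v s))
        ((coad br (ξ t) (ν t)
            + (diaLM ρ (derivWithin v (Set.Icc t₀ t₁) t) (a t)
              + diaLM ρ (v t) (derivWithin a (Set.Icc t₀ t₁) t)))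
          - dcTLM dc (derivWithin v (Set.Icc t₀ t₁) t)) (Set.Icc t₀ t₁) t :=
      (hνdW.add (hasDerivWithinAt_bil (diaLM ρ) (hvd t htm) (had t htm))).sub
        (hasDerivWithinAt_lin (dcTLM dc) (hvd t htm))
    have hfun : (fun s => ν s + diaLM ρ (v s) (a s) - dcTLM dc (v s))
        = fun s => D1 (ξ s, a s) := by
      funext s
      simp only [hνdef, diaLM_apply, dcTLM_apply]
      abel
    rw [hfun] at hcomb
    convert hcomb using 1
    have halg := alg_key br ρ hρ dc hdc (ξ t) (D1 (ξ t, a t)) (a t)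
      (derivWithin a (Set.Icc t₀ t₁) t) (v t) (derivWithin v (Set.Icc t₀ t₁) t)
      (D2 (ξ t, a t)) hα hw
    simp only [hνdef, diaLM_apply, dcTLM_apply]
    rw [← halg]
    abel
  · intro Heq η da dv hη hda hdv hη0 hη1 hda0 hda1 hdv0 hdv1
    have hηc := hη.continuousOn
    have hdac := hda.continuousOn
    have hdvc := hdv.continuousOn
    have hηd : ∀ t ∈ Set.Icc t₀ t₁,
        HasDerivWithinAt η (derivWithin η (Set.Icc t₀ t₁) t) (Set.Icc t₀ t₁) t :=
      fun t htm => ((hη.differentiableOn one_ne_zero) t htm).hasDerivWithinAt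
    have hdad : ∀ t ∈ Set.Icc t₀ t₁,
        HasDerivWithinAt da (derivWithin da (Set.Icc t₀ t₁) t) (Set.Icc t₀ t₁) t :=
      fun t htm => ((hda.differentiableOn one_ne_zero) t htm).hasDerivWithinAt
    have hη'c : ContinuousOn (derivWithin η (Set.Icc t₀ t₁)) (Set.Icc t₀ t₁) :=
      hη.continuousOn_derivWithin uD le_rfl
    have hda'c : ContinuousOn (derivWithin da (Set.Icc t₀ t₁)) (Set.Icc t₀ t₁) :=
      hda.continuousOn_derivWithin uD le_rfl
    have hνdW : ∀ t ∈ Set.Icc t₀ t₁,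
        HasDerivWithinAt ν (coad br (ξ t) (ν t)) (Set.Icc t₀ t₁) t := by
      intro t htm
      obtain ⟨h1, h2, h3⟩ := Heq t htm
      have hα : derivWithin a (Set.Icc t₀ t₁) t = -(dc (ξ t)) - dAct ρ (ξ t) (a t) :=
        eq_sub_of_add_eq (eq_neg_of_add_eq_zero_left h1)
      have hw : derivWithin v (Set.Icc t₀ t₁) t = D2 (ξ t, a t) - ρ (ξ t) (v t) :=
        eq_sub_of_add_eq h2
      have hcomb : HasDerivWithinAt
          (fun s => D1 (ξ s, a s) - diaLM ρ (v s) (a s) + dcTLM dc (v s))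
          (((coad br (ξ t) (D1 (ξ t, a t)) + diamond ρ (D2 (ξ t, a t)) (a t)
              - dcT dc (D2 (ξ t, a t)))
            - (diaLM ρ (derivWithin v (Set.Icc t₀ t₁) t) (a t)
              + diaLM ρ (v t) (derivWithin a (Set.Icc t₀ t₁) t)))
            + dcTLM dc (derivWithin v (Set.Icc t₀ t₁) t)) (Set.Icc t₀ t₁) t :=
        (h3.sub (hasDerivWithinAt_bil (diaLM ρ) (hvd t htm) (had t htm))).add
          (hasDerivWithinAt_lin (dcTLM dc) (hvd t htm))
      have hfun : (fun s => D1 (ξ s, a s) - diaLM ρ (v s) (a s) + dcTLM dc (v s)) = ν := by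
        funext s
        simp only [hνdef, diaLM_apply, dcTLM_apply]
      rw [hfun] at hcomb
      convert hcomb using 1
      have halg := alg_key br ρ hρ dc hdc (ξ t) (D1 (ξ t, a t)) (a t)
        (derivWithin a (Set.Icc t₀ t₁) t) (v t) (derivWithin v (Set.Icc t₀ t₁) t)
        (D2 (ξ t, a t)) hα hw
      simp only [hνdef, diaLM_apply, dcTLM_apply]
      rw [← halg]
    set G : ℝ → ℝ := fun s => ν s (η s) + da s (v s) with hGdef
    have hGc : ContinuousOn G (Set.Icc t₀ t₁) :=
      (hνc.clm_apply hηc).add (hdac.clm_apply hvc)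
    have hGd : ∀ t ∈ Set.Icc t₀ t₁, HasDerivWithinAt G
        ((D1 (ξ t, a t)) (derivWithin η (Set.Icc t₀ t₁) t + br (ξ t) (η t))
          + (da t) (D2 (ξ t, a t))
          + (derivWithin da (Set.Icc t₀ t₁) t
              + dAct ρ (derivWithin η (Set.Icc t₀ t₁) t + br (ξ t) (η t)) (a t)
              + dAct ρ (ξ t) (da t)
              + dc (derivWithin η (Set.Icc t₀ t₁) t + br (ξ t) (η t))) (v t)
          + (derivWithin a (Set.Icc t₀ t₁) t + dAct ρ (ξ t) (a t) + dc (ξ t)) (dv t))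
        (Set.Icc t₀ t₁) t := by
      intro t htm
      obtain ⟨h1, h2, _⟩ := Heq t htm
      have hw : derivWithin v (Set.Icc t₀ t₁) t = D2 (ξ t, a t) - ρ (ξ t) (v t) :=
        eq_sub_of_add_eq h2
      have hG1 : HasDerivWithinAt G
          ((coad br (ξ t) (ν t) (η t) + ν t (derivWithin η (Set.Icc t₀ t₁) t))
            + (derivWithin da (Set.Icc t₀ t₁) t (v t)
              + da t (derivWithin v (Set.Icc t₀ t₁) t))) (Set.Icc t₀ t₁) t :=
        ((hνdW t htm).clm_apply (hηd t htm)).add ((hdad t htm).clm_apply (hvd t htm))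
      convert hG1 using 1
      rw [h1, hw]
      simp [hνdef]
      ring
    have hint : IntervalIntegrable (fun t =>
        ((D1 (ξ t, a t)) (derivWithin η (Set.Icc t₀ t₁) t + br (ξ t) (η t))
          + (da t) (D2 (ξ t, a t))
          + (derivWithin da (Set.Icc t₀ t₁) t
              + dAct ρ (derivWithin η (Set.Icc t₀ t₁) t + br (ξ t) (η t)) (a t)
              + dAct ρ (ξ t) (da t)
              + dc (derivWithin η (Set.Icc t₀ t₁) t + br (ξ t) (η t))) (v t)
          + (derivWithin a (Set.Icc t₀ t₁) t + dAct ρ (ξ t) (a t) + dc (ξ t)) (dv t)))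
        MeasureTheory.volume t₀ t₁ := by
      apply ContinuousOn.intervalIntegrable
      rw [huI]
      exact (((hμc.clm_apply (hη'c.add (contOn_bil br hξ hηc))).add
          (hD2c da hdac)).add
        ((((hda'c.add (contOn_bil (dActLM ρ) (hη'c.add (contOn_bil br hξ hηc)) hac)).add
            (contOn_bil (dActLM ρ) hξ hdac)).add
          (contOn_lin dc (hη'c.add (contOn_bil br hξ hηc)))).clm_apply hvc)).add
        (((ha'c.add (contOn_bil (dActLM ρ) hξ hac)).add (contOn_lin dc hξ)).clm_apply hdvc)
    rw [ftc_sub hle hGc hGd hint]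
    simp [hGdef, hη0, hη1, hda0, hda1]
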